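/- Let A be a symmetric positive semidefinite d×d real matrix with eigenvalues λ₁ ≥ λ₂ ≥ ⋯ ≥ λ_d and an orthonormal basis of eigenvectors v₁,…,v_d (with A v_i = λ_i v_i). For k ∈ {0,…,d−1}, let Q_k be the orthogonal projection onto span{v_{k+1},…,v_d} (the span of eigenvectors corresponding to the d−k smallest eigenvalues). Then for every z ∈ ℝ^d, ‖Q_k A z‖₂ ≤ √(λ_{k+1}) · √(zᵀ A z). Consequently, for any points x₁,…,x_n and any point x ∉ {x₁,…,x_n} with (x−x_i)ᵀA(x−x_i) > 0 for all i, the gradient of F(x) = (1/n)·Σ_{i=1}^n √((x−x_i)ᵀA(x−x_i)) satisfies ‖Q_k ∇F(x)‖₂ ≤ √(λ_{k+1}). -/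

import Mathlib

noncomputable section

open Matrix

private lemma dp_sum_left {d : ℕ} {n : Type*} [Fintype n] (f : n → (Fin d → ℝ)) (g : Fin d → ℝ) :
    (∑ i : n, f i) ⬝ᵥ g = ∑ i : n, f i ⬝ᵥ g := by
  simp only [dotProduct, Finset.sum_apply, Finset.sum_mul]
  rw [Finset.sum_comm]

private lemma dp_sum_right {d : ℕ} {n : Type*} [Fintype n] (f : n → (Fin d → ℝ)) (g : Fin d → ℝ) :
    g ⬝ᵥ (∑ i : n, f i) = ∑ i : n, g ⬝ᵥ f i := by
  simp only [dotProduct, Finset.sum_apply, Finset.mul_sum]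
  rw [Finset.sum_comm]

private lemma mv_sum {d : ℕ} {n : Type*} [Fintype n] (A : Matrix (Fin d) (Fin d) ℝ)
    (f : n → (Fin d → ℝ)) : A.mulVec (∑ i : n, f i) = ∑ i : n, A.mulVec (f i) := by
  funext j
  simp only [mulVec, dotProduct, Finset.sum_apply, Finset.mul_sum]
  rw [Finset.sum_comm]

/-- For a symmetric PSD matrix `A` with orthonormal eigenbasis `v₁,…,v_d` and
nonincreasing eigenvalues `λ₁ ≥ ⋯ ≥ λ_d`, the projection `Q_k` onto the span of the
eigenvectors of the `d−k` smallest eigenvalues satisfies `‖Q_k A z‖₂ ≤ √(λ_{k+1})·√(zᵀAz)`;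
consequently the gradient of the average Mahalanobis distance `F` satisfies
`‖Q_k ∇F(x)‖₂ ≤ √(λ_{k+1})`. -/
theorem proj_mulVec_bound_and_geometric_median_gradient
    (d : ℕ) (A : Matrix (Fin d) (Fin d) ℝ) (hA : A.PosSemidef)
    (lam : Fin d → ℝ) (v : Fin d → (Fin d → ℝ))
    (h_eig : ∀ i, A.mulVec (v i) = lam i • v i)
    (h_on : ∀ i j, v i ⬝ᵥ v j = if i = j then (1 : ℝ) else 0)
    (h_mono : ∀ i j : Fin d, i ≤ j → lam j ≤ lam i)
    (k : ℕ) (hk : k < d) :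
    -- Q_k is the orthogonal projection onto span{v_{k+1},…,v_d}
    let Q : (Fin d → ℝ) → (Fin d → ℝ) :=
      fun z => ∑ i : Fin d, if k ≤ (i : ℕ) then (v i ⬝ᵥ z) • v i else 0;
    (∀ z : Fin d → ℝ,
      Real.sqrt (Q (A.mulVec z) ⬝ᵥ Q (A.mulVec z))
        ≤ Real.sqrt (lam ⟨k, hk⟩) * Real.sqrt (z ⬝ᵥ A.mulVec z)) ∧
    (∀ (n : ℕ) (xs : Fin n → (Fin d → ℝ)) (x : Fin d → ℝ),
      (∀ i, x ≠ xs i) →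
      (∀ i, 0 < (x - xs i) ⬝ᵥ A.mulVec (x - xs i)) →
      -- ∇F(x) = (1/n)·Σ_i A(x−x_i)/‖x−x_i‖_A
      let g : Fin d → ℝ := (n : ℝ)⁻¹ •
        ∑ i : Fin n, (Real.sqrt ((x - xs i) ⬝ᵥ A.mulVec (x - xs i)))⁻¹ • A.mulVec (x - xs i);
      Real.sqrt (Q g ⬝ᵥ Q g) ≤ Real.sqrt (lam ⟨k, hk⟩)) := by
  intro Q
  have hT : Aᵀ = A := by simpa [conjTranspose_eq_transpose_of_trivial] using hA.1.eq
  have hsymm : ∀ a b : Fin d → ℝ, a ⬝ᵥ A.mulVec b = b ⬝ᵥ A.mulVec a := by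
    intro a b
    rw [dotProduct_mulVec, ← mulVec_transpose, hT, dotProduct_comm]
  have hpos : ∀ a : Fin d → ℝ, 0 ≤ a ⬝ᵥ A.mulVec a := fun a => by simpa using hA.dotProduct_mulVec_nonneg a
  -- orthonormal expansion
  have hO : ∀ c c' : Fin d → ℝ,
      (∑ i : Fin d, c i • v i) ⬝ᵥ (∑ j : Fin d, c' j • v j) = ∑ i : Fin d, c i * c' i := by
    intro c c'
    rw [dp_sum_left]
    refine Finset.sum_congr rfl fun i _ => ?_
    rw [dp_sum_right]
    simp [smul_dotProduct, dotProduct_smul, h_on, mul_ite, Finset.sum_ite_eq,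
      smul_eq_mul, mul_assoc, mul_comm]
  have hQdef : ∀ z : Fin d → ℝ,
      Q z = ∑ i : Fin d, (if k ≤ (i : ℕ) then v i ⬝ᵥ z else 0) • v i := by
    intro z
    refine Finset.sum_congr rfl fun i _ => ?_
    split_ifs <;> simp
  have hQQ : ∀ z : Fin d → ℝ,
      Q z ⬝ᵥ Q z = ∑ i : Fin d, (if k ≤ (i : ℕ) then (v i ⬝ᵥ z) ^ 2 else 0) := by
    intro z
    rw [hQdef, hO]
    refine Finset.sum_congr rfl fun i _ => ?_
    split_ifs <;> simp [sq]
  have hC : ∀ (z : Fin d → ℝ) (i : Fin d), v i ⬝ᵥ A.mulVec z = lam i * (v i ⬝ᵥ z) := by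
    intro z i
    rw [hsymm, h_eig, dotProduct_smul, smul_eq_mul, dotProduct_comm]
  have hlamnn : ∀ i, 0 ≤ lam i := by
    intro i
    have h := hpos (v i)
    rw [h_eig, dotProduct_smul, smul_eq_mul, h_on] at h
    simpa using h
  -- energy bound
  have hE : ∀ z : Fin d → ℝ, ∑ i : Fin d, lam i * (v i ⬝ᵥ z) ^ 2 ≤ z ⬝ᵥ A.mulVec z := by
    intro z
    set b : Fin d → ℝ := fun i => v i ⬝ᵥ z with hb
    set p : Fin d → ℝ := ∑ i : Fin d, b i • v i with hp
    set r : Fin d → ℝ := z - p with hr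
    have hvp : ∀ i, v i ⬝ᵥ p = b i := by
      intro i
      rw [hp, dp_sum_right]
      simp [dotProduct_smul, h_on, mul_ite, Finset.sum_ite_eq, dotProduct_comm (v i)]
    have hvr : ∀ i, v i ⬝ᵥ r = 0 := by
      intro i
      rw [hr, dotProduct_sub, hvp]
      simp [hb]
    have hAp : A.mulVec p = ∑ i : Fin d, (lam i * b i) • v i := by
      rw [hp, mv_sum]
      refine Finset.sum_congr rfl fun i _ => ?_
      rw [mulVec_smul, h_eig, smul_smul, mul_comm]
    have hrAp : r ⬝ᵥ A.mulVec p = 0 := by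
      rw [hAp, dp_sum_right]
      refine Finset.sum_eq_zero fun i _ => ?_
      rw [dotProduct_smul, dotProduct_comm, hvr]
      simp
    have hpAp : p ⬝ᵥ A.mulVec p = ∑ i : Fin d, lam i * b i ^ 2 := by
      rw [hAp, hp, hO]
      refine Finset.sum_congr rfl fun i _ => ?_
      ring
    have hz : z = p + r := by rw [hr]; ring
    have hsplit : z ⬝ᵥ A.mulVec z
        = p ⬝ᵥ A.mulVec p + (p ⬝ᵥ A.mulVec r + (r ⬝ᵥ A.mulVec p + r ⬝ᵥ A.mulVec r)) := by
      conv_lhs => rw [hz]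
      rw [mulVec_add, add_dotProduct, dotProduct_add, dotProduct_add]
      ring
    have hrr := hpos r
    have hpAr : p ⬝ᵥ A.mulVec r = 0 := by rw [hsymm]; exact hrAp
    rw [hsplit, hpAp, hpAr, hrAp]
    simp only [hb]
    linarith
  -- Part 1
  have part1 : ∀ z : Fin d → ℝ,
      Real.sqrt (Q (A.mulVec z) ⬝ᵥ Q (A.mulVec z))
        ≤ Real.sqrt (lam ⟨k, hk⟩) * Real.sqrt (z ⬝ᵥ A.mulVec z) := by
    intro z
    have key : Q (A.mulVec z) ⬝ᵥ Q (A.mulVec z) ≤ lam ⟨k, hk⟩ * (z ⬝ᵥ A.mulVec z) := by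
      rw [hQQ]
      have step1 : ∑ i : Fin d, (if k ≤ (i : ℕ) then (v i ⬝ᵥ A.mulVec z) ^ 2 else 0)
          ≤ ∑ i : Fin d, lam ⟨k, hk⟩ * (lam i * (v i ⬝ᵥ z) ^ 2) := by
        refine Finset.sum_le_sum fun i _ => ?_
        rw [hC]
        split_ifs with h
        · have hle : lam i ≤ lam ⟨k, hk⟩ := h_mono ⟨k, hk⟩ i h
          have h0 : 0 ≤ lam i := hlamnn i
          nlinarith [mul_nonneg (mul_nonneg (sub_nonneg.2 hle) h0) (sq_nonneg (v i ⬝ᵥ z))]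
        · have h0 : 0 ≤ lam i := hlamnn i
          have h1 : 0 ≤ lam ⟨k, hk⟩ := hlamnn _
          positivity
      rw [← Finset.mul_sum] at step1
      exact step1.trans (mul_le_mul_of_nonneg_left (hE z) (hlamnn _))
    calc Real.sqrt (Q (A.mulVec z) ⬝ᵥ Q (A.mulVec z))
        ≤ Real.sqrt (lam ⟨k, hk⟩ * (z ⬝ᵥ A.mulVec z)) := Real.sqrt_le_sqrt key
      _ = Real.sqrt (lam ⟨k, hk⟩) * Real.sqrt (z ⬝ᵥ A.mulVec z) :=
          Real.sqrt_mul (hlamnn _) _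
  refine ⟨part1, ?_⟩
  -- Part 2
  intro n xs x hne hpw g
  set lk := Real.sqrt (lam ⟨k, hk⟩) with hlk
  have hlknn : 0 ≤ lk := Real.sqrt_nonneg _
  -- the coefficient map into Euclidean space
  set T : (Fin d → ℝ) → EuclideanSpace ℝ (Fin d) :=
    fun z => WithLp.toLp 2 (fun i => if k ≤ (i : ℕ) then v i ⬝ᵥ z else 0) with hTdef
  have hN : ∀ z : Fin d → ℝ, Real.sqrt (Q z ⬝ᵥ Q z) = ‖T z‖ := by
    intro z
    rw [EuclideanSpace.norm_eq, hQQ]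
    congr 1
    refine Finset.sum_congr rfl fun i _ => ?_
    by_cases h : k ≤ (i : ℕ) <;> simp [hTdef, h]
  have hTsmul : ∀ (c : ℝ) (a : Fin d → ℝ), T (c • a) = c • T a := by
    intro c a
    ext i
    by_cases h : k ≤ (i : ℕ) <;> simp [hTdef, h, dotProduct_smul]
  have hTsum : ∀ (m : ℕ) (f : Fin m → (Fin d → ℝ)),
      T (∑ i : Fin m, f i) = ∑ i : Fin m, T (f i) := by
    intro m f
    ext j
    rw [WithLp.ofLp_sum, Finset.sum_apply j Finset.univ (fun i => (T (f i)).ofLp)]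
    by_cases h : k ≤ (j : ℕ) <;> simp [hTdef, h, dp_sum_right]
  set w : Fin n → (Fin d → ℝ) := fun i => x - xs i with hw
  set s : Fin n → ℝ := fun i => Real.sqrt (w i ⬝ᵥ A.mulVec (w i)) with hsdef
  have hs : ∀ i, 0 < s i := fun i => Real.sqrt_pos.2 (hpw i)
  have hbound : ∀ i : Fin n, ‖T ((s i)⁻¹ • A.mulVec (w i))‖ ≤ lk := by
    intro i
    have h1 : (s i)⁻¹ • A.mulVec (w i) = A.mulVec ((s i)⁻¹ • w i) := (mulVec_smul _ _ _).symm
    have h2 := part1 ((s i)⁻¹ • w i)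
    rw [hN] at h2
    have h3 : ((s i)⁻¹ • w i) ⬝ᵥ A.mulVec ((s i)⁻¹ • w i)
        = (s i)⁻¹ * ((s i)⁻¹ * (w i ⬝ᵥ A.mulVec (w i))) := by
      rw [mulVec_smul, smul_dotProduct, dotProduct_smul]
      simp [smul_eq_mul]
    have hq : s i ^ 2 = w i ⬝ᵥ A.mulVec (w i) := Real.sq_sqrt (hpw i).le
    have h4 : ((s i)⁻¹ • w i) ⬝ᵥ A.mulVec ((s i)⁻¹ • w i) = 1 := by
      rw [h3, ← hq]
      have hne' : s i ≠ 0 := (hs i).ne'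
      field_simp [pow_two]
    rw [h4, Real.sqrt_one, mul_one] at h2
    rw [h1]
    exact h2
  rw [hN]
  have hg : T g = (n : ℝ)⁻¹ • ∑ i : Fin n, T ((s i)⁻¹ • A.mulVec (w i)) := by
    rw [show g = (n : ℝ)⁻¹ • ∑ i : Fin n, (s i)⁻¹ • A.mulVec (w i) from rfl,
      hTsmul, hTsum]
  rw [hg]
  have hnorm : ‖(n : ℝ)⁻¹ • ∑ i : Fin n, T ((s i)⁻¹ • A.mulVec (w i))‖
      ≤ (n : ℝ)⁻¹ * ∑ i : Fin n, ‖T ((s i)⁻¹ • A.mulVec (w i))‖ := by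
    rw [norm_smul]
    have : ‖(n : ℝ)⁻¹‖ = (n : ℝ)⁻¹ := by
      rw [Real.norm_eq_abs, abs_of_nonneg]; positivity
    rw [this]
    exact mul_le_mul_of_nonneg_left (norm_sum_le _ _) (by positivity)
  refine hnorm.trans ?_
  have hsum : ∑ i : Fin n, ‖T ((s i)⁻¹ • A.mulVec (w i))‖ ≤ n * lk := by
    calc ∑ i : Fin n, ‖T ((s i)⁻¹ • A.mulVec (w i))‖ ≤ ∑ _i : Fin n, lk :=
          Finset.sum_le_sum fun i _ => hbound i
      _ = n * lk := by simp [Finset.sum_const, nsmul_eq_mul]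
  have hninv : (n : ℝ)⁻¹ * (n : ℝ) ≤ 1 := by
    rcases Nat.eq_zero_or_pos n with h | h
    · simp [h]
    · rw [inv_mul_cancel₀ (by positivity : (n : ℝ) ≠ 0)]
  calc (n : ℝ)⁻¹ * ∑ i : Fin n, ‖T ((s i)⁻¹ • A.mulVec (w i))‖
      ≤ (n : ℝ)⁻¹ * (n * lk) := mul_le_mul_of_nonneg_left hsum (by positivity)
    _ = ((n : ℝ)⁻¹ * n) * lk := by ring
    _ ≤ 1 * lk := mul_le_mul_of_nonneg_right hninv hlknn
    _ = lk := one_mul lk
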